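/- Let q = (t_1^{b_1},...,t_r^{b_r}) be an irreducible monomial ideal of S with b_i ≥ 1, and let a ∈ ℕ^s, n ≥ 1. Then t^a belongs to the integral closure of q^n if and only if Σ_{i=1}^r a_i/b_i ≥ n. Moreover, the Newton polyhedron NP(q) equals {x ∈ ℝ^s : x ≥ 0, Σ_{i=1}^r x_i/b_i ≥ 1} and its vertex set is {b_1 e_1, ..., b_r e_r}. -/

import Mathlib

open MvPolynomial

noncomputable section

/-- The integral closure of a monomial ideal `J`: the ideal generated by all monomials
`t^a` with `(t^a)^p ∈ J^p` for some `p ≥ 1`. -/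
def intCl {σ : Type*} {K : Type*} [Field K] (J : Ideal (MvPolynomial σ K)) :
    Ideal (MvPolynomial σ K) :=
  Ideal.span { f | ∃ (a : σ →₀ ℕ) (p : ℕ), 1 ≤ p ∧ f = monomial a 1 ∧
    (monomial a 1 : MvPolynomial σ K) ^ p ∈ J ^ p }

/-- The irreducible monomial ideal `q = (t_1^{b_1}, ..., t_r^{b_r})` of `K[t_1,...,t_s]`. -/
def irrId (K : Type*) [Field K] {s r : ℕ} (h : r ≤ s) (b : Fin r → ℕ) :
    Ideal (MvPolynomial (Fin s) K) :=
  Ideal.span (Set.range fun i : Fin r => (X (Fin.castLE h i) : MvPolynomial (Fin s) K) ^ b i)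

/-- The Newton polyhedron `NP(q) = ℝ_+^s + conv(b_1 e_1, ..., b_r e_r)` of `q`. -/
def NPq {s r : ℕ} (h : r ≤ s) (b : Fin r → ℕ) : Set (Fin s → ℝ) :=
  {x | ∃ p ∈ convexHull ℝ (Set.range fun i : Fin r =>
      fun j : Fin s => if j = Fin.castLE h i then ((b i : ℝ)) else 0),
    ∃ z : Fin s → ℝ, (∀ i, 0 ≤ z i) ∧ x = z + p}

section helpers
variable {s r : ℕ} (h : r ≤ s) (b : Fin r → ℕ)

/-- the vertex candidates -/
def vtx (i : Fin r) : Fin s → ℝ := fun j => if j = Fin.castLE h i then ((b i : ℝ)) else 0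

/-- the linear functional -/
def Lr (x : Fin s → ℝ) : ℝ := ∑ i : Fin r, x (Fin.castLE h i) / (b i : ℝ)

variable {h b}

lemma Lr_add (x y : Fin s → ℝ) : Lr h b (x + y) = Lr h b x + Lr h b y := by
  simp [Lr, add_div, Finset.sum_add_distrib]

lemma Lr_smul (c : ℝ) (x : Fin s → ℝ) : Lr h b (c • x) = c * Lr h b x := by
  simp [Lr, Finset.mul_sum, mul_div_assoc]

lemma Lr_smul' (c : ℝ) (x : Fin s → ℝ) : Lr h b (fun j => c * x j) = c * Lr h b x :=
  Lr_smul c x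

lemma Lr_single (hb : ∀ i, 1 ≤ b i) (i : Fin r) (t : ℝ) :
    Lr h b (Pi.single (Fin.castLE h i) t) = t / b i := by
  rw [Lr, Finset.sum_eq_single i]
  · simp
  · intro j _ hj
    rw [Pi.single_eq_of_ne (fun e => hj (Fin.castLE_injective h e)), zero_div]
  · simp

lemma Lr_single_off (j : Fin s) (hj : ∀ i : Fin r, j ≠ Fin.castLE h i) (t : ℝ) :
    Lr h b (Pi.single j t) = 0 := by
  rw [Lr]
  refine Finset.sum_eq_zero fun i _ => ?_
  rw [Pi.single_eq_of_ne (Ne.symm (hj i)), zero_div]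

lemma Lr_vtx (hb : ∀ i, 1 ≤ b i) (i : Fin r) : Lr h b (vtx h b i) = 1 := by
  have hbi : (b i : ℝ) ≠ 0 := Nat.cast_ne_zero.mpr (Nat.one_le_iff_ne_zero.mp (hb i))
  rw [Lr, Finset.sum_eq_single i]
  · simp [vtx, div_self hbi]
  · intro j _ hj
    have : Fin.castLE h j ≠ Fin.castLE h i := fun e => hj (Fin.castLE_injective h e)
    simp [vtx, this]
  · simp

lemma convex_good (hb : ∀ i, 1 ≤ b i) :
    Convex ℝ {x : Fin s → ℝ | (∀ i, 0 ≤ x i) ∧ 1 ≤ Lr h b x} := by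
  rintro x ⟨hx0, hx1⟩ y ⟨hy0, hy1⟩ a c ha hc hac
  constructor
  · intro i
    have := hx0 i; have := hy0 i
    have : 0 ≤ a * x i + c * y i := by positivity
    simpa using this
  · have : Lr h b (a • x + c • y) = a * Lr h b x + c * Lr h b y := by
      rw [Lr_add, Lr_smul, Lr_smul]
    rw [this]
    calc (1:ℝ) = a * 1 + c * 1 := by rw [mul_one, mul_one, hac]
    _ ≤ a * Lr h b x + c * Lr h b y := by
        gcongr <;> assumption

lemma NPq_eq (hb : ∀ i, 1 ≤ b i) :
    NPq h b = {x : Fin s → ℝ | (∀ i, 0 ≤ x i) ∧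
        1 ≤ ∑ i : Fin r, x (Fin.castLE h i) / (b i : ℝ)} := by
  have hrange : Set.range (fun i : Fin r =>
      fun j : Fin s => if j = Fin.castLE h i then ((b i : ℝ)) else 0) = Set.range (vtx h b) := rfl
  ext x
  constructor
  · rintro ⟨p, hp, z, hz, rfl⟩
    rw [hrange] at hp
    have hpC : p ∈ {x : Fin s → ℝ | (∀ i, 0 ≤ x i) ∧ 1 ≤ Lr h b x} := by
      refine convexHull_min ?_ (convex_good hb) hp
      rintro _ ⟨i, rfl⟩
      refine ⟨fun j => ?_, (Lr_vtx hb i).ge⟩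
      unfold vtx; split <;> positivity
    constructor
    · intro i
      have := hz i; have := hpC.1 i
      simpa using add_nonneg (hz i) (hpC.1 i)
    · have : Lr h b (z + p) = Lr h b z + Lr h b p := Lr_add z p
      have hz' : 0 ≤ Lr h b z := Finset.sum_nonneg fun i _ => by
        have := hz (Fin.castLE h i); positivity
      have := hpC.2
      show 1 ≤ Lr h b (z + p)
      rw [Lr_add]; linarith
  · rintro ⟨hx0, hx1⟩
    set S := Lr h b x with hS
    have hS1 : 1 ≤ S := hx1
    have hSpos : 0 < S := lt_of_lt_of_le one_pos hS1
    set w : Fin r → ℝ := fun i => (x (Fin.castLE h i) / b i) / S with hw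
    have hw0 : ∀ i ∈ Finset.univ, 0 ≤ w i := by
      intro i _
      have := hx0 (Fin.castLE h i)
      have : 0 ≤ x (Fin.castLE h i) / (b i:ℝ) := by positivity
      positivity
    have hwsum : ∑ i : Fin r, w i = 1 := by
      show (∑ i : Fin r, x (Fin.castLE h i) / (b i:ℝ) / S) = 1
      rw [← Finset.sum_div]
      exact div_self (ne_of_gt hSpos)
    set p : Fin s → ℝ := ∑ i : Fin r, w i • vtx h b i with hp
    have hpmem : p ∈ convexHull ℝ (Set.range (vtx h b)) := by
      rw [hp, ← Finset.centerMass_eq_of_sum_1 _ _ hwsum]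
      exact Finset.centerMass_mem_convexHull _ hw0 (hwsum ▸ one_pos)
        (fun i _ => Set.mem_range_self i)
    have hple : ∀ j, p j ≤ x j := by
      intro j
      have hpj : p j = ∑ i : Fin r, w i * (if j = Fin.castLE h i then ((b i:ℝ)) else 0) := by
        rw [hp]; simp [vtx]
      by_cases hj : ∃ i : Fin r, j = Fin.castLE h i
      · obtain ⟨i, rfl⟩ := hj
        have hbi : (0:ℝ) < b i := by exact_mod_cast hb i
        rw [hpj, Finset.sum_eq_single i]
        · rw [if_pos rfl]
          show x (Fin.castLE h i) / (b i:ℝ) / S * (b i:ℝ) ≤ x (Fin.castLE h i)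
          have e1 : x (Fin.castLE h i) / (b i:ℝ) / S * (b i:ℝ)
              = x (Fin.castLE h i) / S := by
            field_simp
          rw [e1]
          exact div_le_self (hx0 _) hS1
        · intro k _ hk
          have : Fin.castLE h i ≠ Fin.castLE h k := fun e => hk (Fin.castLE_injective h e.symm)
          simp [this]
        · simp
      · push_neg at hj
        rw [hpj]
        have : ∀ i ∈ Finset.univ, w i * (if j = Fin.castLE h i then ((b i:ℝ)) else 0) = 0 := by
          intro i _; rw [if_neg (hj i), mul_zero]
        rw [Finset.sum_eq_zero this]
        exact hx0 j
    refine ⟨p, by rwa [hrange], x - p, fun j => sub_nonneg.mpr (hple j), by ring⟩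
end helpers

section part3
variable {s r : ℕ} {h : r ≤ s} {b : Fin r → ℕ}

lemma Lr_neg (d : Fin s → ℝ) : Lr h b (-d) = - Lr h b d := by
  simp [Lr, neg_div, Finset.sum_neg_distrib]

/-- the defining set -/
def Cset (h : r ≤ s) (b : Fin r → ℕ) : Set (Fin s → ℝ) :=
  {x : Fin s → ℝ | (∀ i, 0 ≤ x i) ∧ 1 ≤ Lr h b x}

lemma extreme_perturb {x : Fin s → ℝ}
    (hx : x ∈ Set.extremePoints ℝ (Cset h b))
    (d : Fin s → ℝ) (hLd : Lr h b d = 0)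
    (h1 : ∀ k, 0 ≤ x k + d k) (h2 : ∀ k, 0 ≤ x k - d k) : d = 0 := by
  obtain ⟨⟨hx0, hx1⟩, hext⟩ := hx
  have hmem1 : (x + d) ∈ Cset h b := ⟨h1, by rw [Lr_add, hLd, add_zero]; exact hx1⟩
  have hmem2 : (x - d) ∈ Cset h b := by
    refine ⟨h2, ?_⟩
    rw [sub_eq_add_neg, Lr_add, Lr_neg, hLd, neg_zero, add_zero]
    exact hx1
  have hseg : x ∈ openSegment ℝ (x + d) (x - d) := by
    refine ⟨1/2, 1/2, by norm_num, by norm_num, by norm_num, ?_⟩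
    funext k
    simp only [Pi.add_apply, Pi.sub_apply, Pi.smul_apply, smul_eq_mul]
    ring
  have := hext hmem1 hmem2 hseg
  have : x + d = x + 0 := by rw [add_zero]; exact this
  exact add_left_cancel this

lemma extremePts_sub (hb : ∀ i, 1 ≤ b i) :
    Set.extremePoints ℝ (Cset h b) ⊆ Set.range (vtx h b) := by
  intro x hx
  obtain ⟨⟨hx0, hx1⟩, hext⟩ := hx
  set S := Lr h b x with hS
  have hSpos : 0 < S := lt_of_lt_of_le one_pos hx1
  -- Step 1 : S = 1
  have hS1 : S = 1 := by
    by_contra hne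
    have hSgt : 1 < S := lt_of_le_of_ne hx1 (Ne.symm hne)
    have hmem1 : ((1/S) • x) ∈ Cset h b := by
      constructor
      · intro k; have := hx0 k
        simp only [Pi.smul_apply, smul_eq_mul]
        positivity
      · rw [Lr_smul, ← hS, one_div, inv_mul_cancel₀ (ne_of_gt hSpos)]
    have hmem2 : ((2 - 1/S) • x) ∈ Cset h b := by
      have hc : 0 < 2 - 1/S := by
        have : 1/S < 1 := by rw [div_lt_one hSpos]; exact hSgt
        linarith
      constructor
      · intro k; have := hx0 k
        simp only [Pi.smul_apply, smul_eq_mul]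
        positivity
      · rw [Lr_smul, ← hS]
        have : (2 - 1/S) * S = 2*S - 1 := by field_simp
        rw [this]; linarith
    have hseg : x ∈ openSegment ℝ ((1/S) • x) ((2 - 1/S) • x) := by
      refine ⟨1/2, 1/2, by norm_num, by norm_num, by norm_num, ?_⟩
      funext k
      simp only [Pi.add_apply, Pi.smul_apply, smul_eq_mul]
      field_simp
      ring
    have hx1eq := hext hmem1 hmem2 hseg
    have : Lr h b ((1/S) • x) = Lr h b x := by rw [hx1eq]
    rw [Lr_smul, ← hS, one_div, inv_mul_cancel₀ (ne_of_gt hSpos)] at this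
    exact hne this.symm
  -- Step 2 : x vanishes off the image of castLE
  have hoff : ∀ j : Fin s, (∀ i : Fin r, j ≠ Fin.castLE h i) → x j = 0 := by
    intro j hj
    have hd := extreme_perturb ⟨⟨hx0, hx1⟩, hext⟩ (Pi.single j (x j))
      (Lr_single_off j hj (x j)) ?_ ?_
    · have := congrFun hd j
      rwa [Pi.single_eq_same, Pi.zero_apply] at this
    · intro k
      by_cases hk : k = j
      · subst hk; rw [Pi.single_eq_same]; have := hx0 k; linarith
      · rw [Pi.single_eq_of_ne hk, add_zero]; exact hx0 k
    · intro k
      by_cases hk : k = j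
      · subst hk; rw [Pi.single_eq_same]; linarith [hx0 k]
      · rw [Pi.single_eq_of_ne hk, sub_zero]; exact hx0 k
  -- Step 3 : at most one nonzero coordinate among the castLE image
  have hone : ∀ i j : Fin r, i ≠ j → x (Fin.castLE h i) ≠ 0 → x (Fin.castLE h j) ≠ 0 → False := by
    intro i j hij hxi hxj
    have hbi : (0:ℝ) < b i := by exact_mod_cast hb i
    have hbj : (0:ℝ) < b j := by exact_mod_cast hb j
    have hxi' : 0 < x (Fin.castLE h i) := lt_of_le_of_ne (hx0 _) (Ne.symm hxi)
    have hxj' : 0 < x (Fin.castLE h j) := lt_of_le_of_ne (hx0 _) (Ne.symm hxj)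
    set c : ℝ := min (x (Fin.castLE h i) / b i) (x (Fin.castLE h j) / b j) with hc
    have hcpos : 0 < c := lt_min (by positivity) (by positivity)
    have hij' : Fin.castLE h i ≠ Fin.castLE h j := fun e => hij (Fin.castLE_injective h e)
    set d : Fin s → ℝ := Pi.single (Fin.castLE h i) (b i * c)
      + Pi.single (Fin.castLE h j) (-(b j * c)) with hd
    have hLd : Lr h b d = 0 := by
      rw [hd, Lr_add, Lr_single hb, Lr_single hb]
      field_simp
      ring
    have key := extreme_perturb ⟨⟨hx0, hx1⟩, hext⟩ d hLd ?_ ?_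
    · have := congrFun key (Fin.castLE h i)
      rw [hd, Pi.add_apply, Pi.single_eq_same, Pi.single_eq_of_ne hij',
        add_zero, Pi.zero_apply] at this
      nlinarith
    · intro k
      rw [hd, Pi.add_apply]
      by_cases hki : k = Fin.castLE h i
      · subst hki
        rw [Pi.single_eq_same, Pi.single_eq_of_ne hij', add_zero]
        nlinarith
      · rw [Pi.single_eq_of_ne hki]
        by_cases hkj : k = Fin.castLE h j
        · subst hkj
          rw [Pi.single_eq_same, zero_add]
          have hcle : c ≤ x (Fin.castLE h j) / b j := min_le_right _ _
          have : (b j:ℝ) * c ≤ x (Fin.castLE h j) := by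
            rw [mul_comm, ← le_div_iff₀ hbj]; exact hcle
          linarith [hx0 (Fin.castLE h j)]
        · rw [Pi.single_eq_of_ne hkj]
          simpa using hx0 k
    · intro k
      rw [hd, Pi.add_apply]
      by_cases hki : k = Fin.castLE h i
      · subst hki
        rw [Pi.single_eq_same, Pi.single_eq_of_ne hij', add_zero]
        have hcle : c ≤ x (Fin.castLE h i) / b i := min_le_left _ _
        have : (b i:ℝ) * c ≤ x (Fin.castLE h i) := by
          rw [mul_comm, ← le_div_iff₀ hbi]; exact hcle
        linarith
      · rw [Pi.single_eq_of_ne hki]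
        by_cases hkj : k = Fin.castLE h j
        · subst hkj
          rw [Pi.single_eq_same, zero_add]
          nlinarith [hx0 (Fin.castLE h j)]
        · rw [Pi.single_eq_of_ne hkj]
          simpa using hx0 k
  -- Step 4 : conclude x = vtx i for some i
  have hex : ∃ i : Fin r, x (Fin.castLE h i) ≠ 0 := by
    by_contra hno
    push_neg at hno
    have : S = 0 := by
      rw [hS, Lr]
      exact Finset.sum_eq_zero fun i _ => by rw [hno i, zero_div]
    rw [this] at hS1; norm_num at hS1
  obtain ⟨i, hi⟩ := hex
  refine ⟨i, ?_⟩
  have hSi : S = x (Fin.castLE h i) / b i := by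
    rw [hS, Lr, Finset.sum_eq_single i]
    · intro j _ hji
      by_cases hxj : x (Fin.castLE h j) = 0
      · rw [hxj, zero_div]
      · exact (hone j i hji hxj hi).elim
    · simp
  have hbi : (0:ℝ) < b i := by exact_mod_cast hb i
  have hxi : x (Fin.castLE h i) = b i := by
    have := hS1
    rw [hSi] at this
    field_simp at this
    linarith
  funext k
  unfold vtx
  by_cases hk : k = Fin.castLE h i
  · subst hk; rw [if_pos rfl]; exact hxi.symm
  · rw [if_neg hk]
    by_cases hk2 : ∃ j : Fin r, k = Fin.castLE h j
    · obtain ⟨j, rfl⟩ := hk2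
      have hji : j ≠ i := fun e => hk (by rw [e])
      by_contra hxk
      exact hone j i hji (fun e => hxk e.symm) hi
    · push_neg at hk2
      exact (hoff k hk2).symm

lemma vtx_mem_extremePoints (hb : ∀ i, 1 ≤ b i) (i : Fin r) :
    vtx h b i ∈ Set.extremePoints ℝ (Cset h b) := by
  have hbi : (0:ℝ) < b i := by exact_mod_cast hb i
  have hvmem : vtx h b i ∈ Cset h b := by
    refine ⟨fun j => ?_, (Lr_vtx hb i).ge⟩
    unfold vtx; split <;> positivity
  refine ⟨hvmem, ?_⟩
  rintro x₁ ⟨hx10, hx11⟩ x₂ ⟨hx20, hx21⟩ ⟨a, c, ha, hc, hac, heq⟩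
  -- off coordinate j ≠ castLE i : both vanish
  have hzero : ∀ j, j ≠ Fin.castLE h i → x₁ j = 0 ∧ x₂ j = 0 := by
    intro j hj
    have := congrFun heq j
    simp only [Pi.add_apply, Pi.smul_apply, smul_eq_mul] at this
    rw [show vtx h b i j = 0 from if_neg hj] at this
    constructor
    · by_contra hne
      have h1 : 0 < x₁ j := lt_of_le_of_ne (hx10 j) (Ne.symm hne)
      nlinarith [hx20 j, mul_nonneg hc.le (hx20 j)]
    · by_contra hne
      have h2 : 0 < x₂ j := lt_of_le_of_ne (hx20 j) (Ne.symm hne)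
      nlinarith [hx10 j, mul_nonneg ha.le (hx10 j)]
  -- hence L x₁ = x₁ (castLE i) / b i etc
  have hL1 : (b i:ℝ) ≤ x₁ (Fin.castLE h i) := by
    have : Lr h b x₁ = x₁ (Fin.castLE h i) / b i := by
      rw [Lr, Finset.sum_eq_single i]
      · intro j _ hji
        rw [(hzero _ (fun e => hji (Fin.castLE_injective h e))).1, zero_div]
      · simp
    rw [this, le_div_iff₀ hbi, one_mul] at hx11
    exact hx11
  have hL2 : (b i:ℝ) ≤ x₂ (Fin.castLE h i) := by
    have : Lr h b x₂ = x₂ (Fin.castLE h i) / b i := by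
      rw [Lr, Finset.sum_eq_single i]
      · intro j _ hji
        rw [(hzero _ (fun e => hji (Fin.castLE_injective h e))).2, zero_div]
      · simp
    rw [this] at hx21
    calc (b i:ℝ) = (b i:ℝ) * 1 := by ring
    _ ≤ (b i:ℝ) * (x₂ (Fin.castLE h i)/b i) := by nlinarith
    _ = x₂ (Fin.castLE h i) := by field_simp
  have hat : a * x₁ (Fin.castLE h i) + c * x₂ (Fin.castLE h i) = b i := by
    have := congrFun heq (Fin.castLE h i)
    simpa [vtx] using this
  have he1 : x₁ (Fin.castLE h i) = b i := by nlinarith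
  have he2 : x₂ (Fin.castLE h i) = b i := by nlinarith
  · funext j
    by_cases hj : j = Fin.castLE h i
    · subst hj; rw [he1]; simp [vtx]
    · rw [(hzero j hj).1, show vtx h b i j = 0 from if_neg hj]

end part3

section part1
variable {K : Type*} [Field K] {s r : ℕ} (h : r ≤ s) (b : Fin r → ℕ)

/-- the rational linear functional on exponents -/
def Lq (a : Fin s →₀ ℕ) : ℚ := ∑ i : Fin r, (a (Fin.castLE h i) : ℚ) / (b i : ℚ)

variable {h b}

lemma Lq_add (a c : Fin s →₀ ℕ) : Lq h b (a + c) = Lq h b a + Lq h b c := by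
  simp [Lq, add_div, Finset.sum_add_distrib]

lemma Lq_mono (hb : ∀ i, 1 ≤ b i) {a c : Fin s →₀ ℕ} (hac : a ≤ c) :
    Lq h b a ≤ Lq h b c := by
  refine Finset.sum_le_sum fun i _ => ?_
  have hbi : (0:ℚ) < b i := by exact_mod_cast hb i
  have : (a (Fin.castLE h i) : ℚ) ≤ (c (Fin.castLE h i) : ℚ) := by exact_mod_cast hac _
  gcongr

lemma Lq_smul (p : ℕ) (a : Fin s →₀ ℕ) : Lq h b (p • a) = p * Lq h b a := by
  simp [Lq, Finset.mul_sum, mul_div_assoc]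

lemma Lq_single (hb : ∀ i, 1 ≤ b i) (i : Fin r) (m : ℕ) :
    Lq h b (Finsupp.single (Fin.castLE h i) m) = (m : ℚ) / b i := by
  rw [Lq, Finset.sum_eq_single i]
  · rw [Finsupp.single_eq_same]
  · intro j _ hj
    rw [Finsupp.single_eq_of_ne' (fun e => hj (Fin.castLE_injective h e).symm), Nat.cast_zero, zero_div]
  · simp

variable (h b K) in
/-- the monomial ideal of all exponents with `Lq ≥ m` -/
def Jid (m : ℕ) : Ideal (MvPolynomial (Fin s) K) :=
  Ideal.span ((fun d => monomial d (1:K)) '' {A : Fin s →₀ ℕ | (m:ℚ) ≤ Lq h b A})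

lemma Jid_mul_le (m m' : ℕ) : Jid K h b m * Jid K h b m' ≤ Jid K h b (m + m') := by
  rw [Jid, Jid, Ideal.span_mul_span]
  refine Ideal.span_le.mpr ?_
  rintro x hx
  rw [Set.mem_mul] at hx
  obtain ⟨f, ⟨A, hA, rfl⟩, g, ⟨B, hB, rfl⟩, hx⟩ := hx
  subst hx
  rw [monomial_mul, one_mul]
  refine Ideal.subset_span ⟨A + B, ?_, rfl⟩
  rw [Set.mem_setOf_eq, Lq_add, Nat.cast_add]
  exact add_le_add hA hB

lemma irrId_le_Jid (hb : ∀ i, 1 ≤ b i) : irrId K h b ≤ Jid K h b 1 := by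
  rw [irrId]
  refine Ideal.span_le.mpr ?_
  rintro _ ⟨i, rfl⟩
  have hbi : (0:ℚ) < b i := by exact_mod_cast hb i
  show (X (Fin.castLE h i) : MvPolynomial (Fin s) K) ^ b i ∈ (Jid K h b 1 : Ideal (MvPolynomial (Fin s) K))
  rw [X_pow_eq_monomial]
  refine Ideal.subset_span ⟨_, ?_, rfl⟩
  rw [Set.mem_setOf_eq, Lq_single hb, Nat.cast_one, le_div_iff₀ hbi, one_mul]

lemma irrId_pow_le_Jid (hb : ∀ i, 1 ≤ b i) (n : ℕ) : (irrId K h b) ^ n ≤ Jid K h b n := by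
  induction n with
  | zero =>
    intro f _
    have h1 : (1 : MvPolynomial (Fin s) K) ∈ Jid K h b 0 := by
      refine Ideal.subset_span ⟨0, by simp [Lq], ?_⟩
      simp
    have : Jid K h b 0 = ⊤ := Ideal.eq_top_of_isUnit_mem _ h1 isUnit_one
    rw [this]; trivial
  | succ n ih =>
    calc (irrId K h b) ^ (n+1) = (irrId K h b)^n * irrId K h b := pow_succ _ _
    _ ≤ Jid K h b n * Jid K h b 1 := Ideal.mul_mono ih (irrId_le_Jid hb)
    _ ≤ Jid K h b (n+1) := Jid_mul_le n 1

lemma intCl_le_Jid (hb : ∀ i, 1 ≤ b i) (n : ℕ) :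
    intCl ((irrId K h b) ^ n) ≤ Jid K h b n := by
  rw [intCl]
  refine Ideal.span_le.mpr ?_
  rintro f ⟨a, p, hp, rfl, hmem⟩
  rw [← pow_mul] at hmem
  have hmem' : (monomial a (1:K)) ^ p ∈ Jid K h b (n * p) := irrId_pow_le_Jid hb (n*p) hmem
  rw [monomial_pow, one_pow] at hmem'
  rw [Jid, mem_ideal_span_monomial_image] at hmem'
  have hsup : (p • a) ∈ (monomial (p • a) (1:K)).support := by
    classical
    rw [support_monomial, if_neg (one_ne_zero)]
    exact Finset.mem_singleton_self _
  obtain ⟨si, hsi, hle⟩ := hmem' _ hsup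
  have h1 : ((n * p : ℕ) : ℚ) ≤ Lq h b (p • a) := le_trans hsi (Lq_mono hb hle)
  rw [Lq_smul, Nat.cast_mul] at h1
  have hp0 : (0:ℚ) < p := by exact_mod_cast hp
  have h2 : (n:ℚ) ≤ Lq h b a := by
    rw [mul_comm (n:ℚ) (p:ℚ)] at h1
    exact le_of_mul_le_mul_left h1 hp0
  exact Ideal.subset_span ⟨a, h2, rfl⟩

lemma prod_pow_mem {R : Type*} [CommRing R] (I : Ideal R) {ι : Type*} (t : Finset ι)
    (x : ι → R) (c : ι → ℕ) (hx : ∀ i ∈ t, x i ∈ I) :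
    (∏ i ∈ t, x i ^ c i) ∈ I ^ (∑ i ∈ t, c i) := by
  classical
  induction t using Finset.induction with
  | empty => simp [Ideal.one_eq_top]
  | insert a t' hnotmem ih =>
    rw [Finset.prod_insert hnotmem, Finset.sum_insert hnotmem, pow_add]
    exact Ideal.mul_mem_mul (Ideal.pow_mem_pow (hx a (Finset.mem_insert_self a t')) _)
      (ih fun i hi => hx i (Finset.mem_insert_of_mem hi))

lemma prod_X_pow_eq {ι : Type*} (t : Finset ι) (f : ι → Fin s) (e : ι → ℕ) :
    (∏ i ∈ t, (X (f i) : MvPolynomial (Fin s) K) ^ e i)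
      = monomial (∑ i ∈ t, Finsupp.single (f i) (e i)) (1:K) := by
  classical
  induction t using Finset.induction with
  | empty => simp
  | insert a t' hnotmem ih =>
    rw [Finset.prod_insert hnotmem, Finset.sum_insert hnotmem, ih,
      X_pow_eq_monomial, monomial_mul, one_mul]

lemma mem_intCl_of_Lq (hb : ∀ i, 1 ≤ b i) (a : Fin s →₀ ℕ) (n : ℕ)
    (hn : (n : ℚ) ≤ Lq h b a) :
    (monomial a 1 : MvPolynomial (Fin s) K) ∈ intCl ((irrId K h b) ^ n) := by
  set p : ℕ := ∏ i : Fin r, b i with hp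
  have hp1 : 1 ≤ p := Finset.one_le_prod' fun i _ => hb i
  refine Ideal.subset_span ⟨a, p, hp1, rfl, ?_⟩
  rw [← pow_mul, monomial_pow, one_pow]
  -- choose c i = (p / b i) * a i'
  set c : Fin r → ℕ := fun i => (p / b i) * a (Fin.castLE h i) with hc
  have hdvd : ∀ i, b i ∣ p := fun i => Finset.dvd_prod_of_mem b (Finset.mem_univ i)
  have hcb : ∀ i, c i * b i = p * a (Fin.castLE h i) := by
    intro i
    rw [hc]
    calc p / b i * a (Fin.castLE h i) * b i = p / b i * b i * a (Fin.castLE h i) := by ring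
    _ = p * a (Fin.castLE h i) := by rw [Nat.div_mul_cancel (hdvd i)]
  -- sum bound
  have hsum : n * p ≤ ∑ i : Fin r, c i := by
    have hq : ((n * p : ℕ) : ℚ) ≤ ((∑ i : Fin r, c i : ℕ) : ℚ) := by
      push_cast
      have : ∀ i : Fin r, (c i : ℚ) = (p : ℚ) * (a (Fin.castLE h i) : ℚ) / (b i : ℚ) := by
        intro i
        have hbi : ((b i : ℚ)) ≠ 0 := by
          exact_mod_cast Nat.one_le_iff_ne_zero.mp (hb i)
        rw [eq_div_iff hbi]
        exact_mod_cast hcb i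
      rw [Finset.sum_congr rfl fun i _ => this i]
      have : ∑ i : Fin r, (p:ℚ) * (a (Fin.castLE h i):ℚ) / (b i:ℚ) = (p:ℚ) * Lq h b a := by
        rw [Lq, Finset.mul_sum]
        exact Finset.sum_congr rfl fun i _ => by rw [mul_div_assoc]
      rw [this]
      have hp0 : (0:ℚ) ≤ p := by positivity
      calc (n:ℚ) * (p:ℚ) = (p:ℚ) * n := by ring
      _ ≤ (p:ℚ) * Lq h b a := by gcongr
    exact_mod_cast hq
  -- the divisor monomial
  set D : Fin s →₀ ℕ := ∑ i : Fin r, Finsupp.single (Fin.castLE h i) (b i * c i) with hD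
  have hDle : D ≤ p • a := by
    intro j
    rw [hD, Finsupp.finset_sum_apply]
    by_cases hj : ∃ i : Fin r, j = Fin.castLE h i
    · obtain ⟨i, rfl⟩ := hj
      rw [Finset.sum_eq_single i]
      · rw [Finsupp.single_eq_same, mul_comm, hcb i]
        simp
      · intro k _ hk
        exact Finsupp.single_eq_of_ne' fun e => hk (Fin.castLE_injective h e)
      · simp
    · push_neg at hj
      rw [Finset.sum_eq_zero fun i _ => Finsupp.single_eq_of_ne' (Ne.symm (hj i))]
      exact Nat.zero_le _
  have hmon : (monomial (p • a) (1:K)) = monomial (p • a - D) 1 * monomial D 1 := by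
    rw [monomial_mul, one_mul, tsub_add_cancel_of_le hDle]
  rw [hmon]
  refine Ideal.mul_mem_left _ _ ?_
  have hDprod : (monomial D (1:K)) = ∏ i : Fin r, ((X (Fin.castLE h i)) ^ b i) ^ c i := by
    rw [hD]
    rw [← prod_X_pow_eq Finset.univ (fun i => Fin.castLE h i) (fun i => b i * c i)]
    exact Finset.prod_congr rfl fun i _ => by rw [← pow_mul]
  rw [hDprod]
  have hmem : (∏ i : Fin r, ((X (Fin.castLE h i) : MvPolynomial (Fin s) K) ^ b i) ^ c i)
      ∈ (irrId K h b) ^ (∑ i : Fin r, c i) := by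
    refine prod_pow_mem _ _ _ _ fun i _ => ?_
    exact Ideal.subset_span ⟨i, rfl⟩
  exact Ideal.pow_le_pow_right hsum hmem

lemma part1 (hb : ∀ i, 1 ≤ b i) (a : Fin s →₀ ℕ) (n : ℕ) (hn : 1 ≤ n) :
    ((monomial a 1 : MvPolynomial (Fin s) K) ∈ intCl ((irrId K h b) ^ n) ↔
      (n : ℚ) ≤ ∑ i : Fin r, (a (Fin.castLE h i) : ℚ) / (b i : ℚ)) := by
  constructor
  · intro hmem
    have := intCl_le_Jid hb n hmem
    rw [Jid, mem_ideal_span_monomial_image] at this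
    have hsup : a ∈ (monomial a (1:K)).support := by
      classical
      rw [support_monomial, if_neg one_ne_zero]
      exact Finset.mem_singleton_self _
    obtain ⟨si, hsi, hle⟩ := this _ hsup
    exact le_trans hsi (Lq_mono hb hle)
  · intro hle
    exact mem_intCl_of_Lq hb a n hle

end part1

/-- For `q = (t_1^{b_1},...,t_r^{b_r})`: (1) `t^a ∈ closure(q^n)` iff `Σ a_i/b_i ≥ n`;
(2) `NP(q) = {x ≥ 0 : Σ x_i/b_i ≥ 1}`; (3) the vertex set of `NP(q)` is
`{b_1 e_1, ..., b_r e_r}`. -/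
theorem stmt19 {K : Type*} [Field K] {s r : ℕ} (h : r ≤ s) (hr : 1 ≤ r)
    (b : Fin r → ℕ) (hb : ∀ i, 1 ≤ b i) :
    (∀ (a : Fin s →₀ ℕ) (n : ℕ), 1 ≤ n →
        ((monomial a 1 : MvPolynomial (Fin s) K) ∈ intCl ((irrId K h b) ^ n) ↔
          (n : ℚ) ≤ ∑ i : Fin r, (a (Fin.castLE h i) : ℚ) / (b i : ℚ))) ∧
      NPq h b = {x : Fin s → ℝ | (∀ i, 0 ≤ x i) ∧
        1 ≤ ∑ i : Fin r, x (Fin.castLE h i) / (b i : ℝ)} ∧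
      Set.extremePoints ℝ (NPq h b) = Set.range (fun i : Fin r =>
        fun j : Fin s => if j = Fin.castLE h i then ((b i : ℝ)) else 0) := by
  constructor
  · exact fun a n hn => part1 hb a n hn
  constructor
  · exact NPq_eq hb
  · have hCs : NPq h b = Cset h b := NPq_eq hb
    apply Set.Subset.antisymm
    · intro x hx
      rw [hCs] at hx
      obtain ⟨i, hi⟩ := extremePts_sub hb hx
      exact ⟨i, hi⟩
    · rintro _ ⟨i, rfl⟩
      rw [hCs]
      exact vtx_mem_extremePoints hb i
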